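/- Let X, X_1, X_2, … be independent and identically distributed random variables with the St. Petersburg survival function F̄(x) = 1 for x < 2 and F̄(x) = 2^{−⌊log₂ x⌋} for x ≥ 2. Then for every n of the form n = 2^k with k ∈ ℕ, k ≥ 1, X ≤_st (X_1 + ⋯ + X_n)/n. -/

import Mathlib

open MeasureTheory ProbabilityTheory

/-- Almost surely, all the `X i` are at least 2. -/
lemma stP_ae_ge_two {Ω : Type*} [MeasurableSpace Ω] (P : Measure Ω) [IsProbabilityMeasure P]
    (X : ℕ → Ω → ℝ) (hXmeas : ∀ i, Measurable (X i))
    (hsurv : ∀ i, ∀ x : ℝ,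
      P {ω | X i ω > x} =
        ENNReal.ofReal (if x < 2 then 1 else (2 : ℝ) ^ (-⌊Real.logb 2 x⌋))) :
    ∀ᵐ ω ∂P, ∀ i, 2 ≤ X i ω := by
  rw [ae_all_iff]
  intro i
  have h1 : ∀ c : ℝ, c < 2 → P {ω | X i ω ≤ c} = 0 := by
    intro c hc
    have h2 : P {ω | X i ω > c} = 1 := by
      rw [hsurv i c, if_pos hc, ENNReal.ofReal_one]
    have h3 : {ω | X i ω ≤ c} = {ω | X i ω > c}ᶜ := by
      ext ω; simp [not_lt]
    rw [h3, prob_compl_eq_one_sub (measurableSet_lt measurable_const (hXmeas i)), h2, tsub_self]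
  have h4 : {ω | X i ω < 2} ⊆ ⋃ n : ℕ, {ω | X i ω ≤ 2 - 1/(n+1 : ℝ)} := by
    intro ω hω
    have hω' : X i ω < 2 := hω
    obtain ⟨n, hn⟩ := exists_nat_one_div_lt (show (0:ℝ) < 2 - X i ω by linarith)
    exact Set.mem_iUnion.2 ⟨n, by simp only [Set.mem_setOf_eq]; linarith⟩
  have h5 : P {ω | X i ω < 2} = 0 := by
    refine measure_mono_null h4 (measure_iUnion_null fun n => h1 _ ?_)
    have : (0:ℝ) < 1/(n+1 : ℝ) := by positivity
    linarith
  rw [ae_iff]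
  simpa [not_le] using h5

/-- Independence of sums over disjoint finsets. -/
lemma stP_indep_sum {Ω : Type*} [MeasurableSpace Ω] {P : Measure Ω}
    (X : ℕ → Ω → ℝ) (hXmeas : ∀ i, Measurable (X i))
    (hIndep : iIndepFun X P)
    (S T : Finset ℕ) (hST : Disjoint S T) :
    IndepFun (fun ω => ∑ i ∈ S, X i ω) (fun ω => ∑ i ∈ T, X i ω) P := by
  have h := (hIndep.indepFun_finset S T hST hXmeas).comp
    (Finset.measurable_sum Finset.univ fun (i : S) _ => measurable_pi_apply i)
    (Finset.measurable_sum Finset.univ fun (i : T) _ => measurable_pi_apply i)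
  have e1 : (fun ω => ∑ i ∈ S, X i ω)
      = (fun v : S → ℝ => ∑ i, v i) ∘ (fun a (i : S) => X i a) := by
    funext ω; exact (Finset.sum_coe_sort S fun i => X i ω).symm
  have e2 : (fun ω => ∑ i ∈ T, X i ω)
      = (fun v : T → ℝ => ∑ i, v i) ∘ (fun a (i : T) => X i a) := by
    funext ω; exact (Finset.sum_coe_sort T fun i => X i ω).symm
  rw [e1, e2]
  exact h

/-- Key inductive estimate: a sum of `2^j` St. Petersburg variables exceeds any
`y < 2^(j+m+1)` with probability at least `2^(-m)`. -/
lemma stP_key {Ω : Type*} [MeasurableSpace Ω] (P : Measure Ω) [IsProbabilityMeasure P]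
    (X : ℕ → Ω → ℝ) (hXmeas : ∀ i, Measurable (X i))
    (hIndep : iIndepFun X P)
    (hsurv : ∀ i, ∀ x : ℝ,
      P {ω | X i ω > x} =
        ENNReal.ofReal (if x < 2 then 1 else (2 : ℝ) ^ (-⌊Real.logb 2 x⌋))) :
    ∀ (j : ℕ) (T : Finset ℕ), T.card = 2 ^ j → ∀ (m : ℕ), 1 ≤ m → ∀ y : ℝ,
      y < 2 ^ (j + m + 1) →
      ENNReal.ofReal ((2:ℝ) ^ (-(m:ℤ))) ≤ P {ω | ∑ i ∈ T, X i ω > y} := by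
  intro j
  induction j with
  | zero =>
    intro T hT m hm y hy
    obtain ⟨i, rfl⟩ := Finset.card_eq_one.1 (by simpa using hT)
    simp only [Finset.sum_singleton]
    rw [hsurv i y]
    apply ENNReal.ofReal_le_ofReal
    by_cases hc : y < 2
    · rw [if_pos hc]
      exact zpow_le_one_of_nonpos₀ one_le_two (by omega)
    · rw [if_neg hc]
      apply zpow_le_zpow_right₀ one_le_two
      have hy2 : (2:ℝ) ≤ y := not_lt.1 hc
      have hy' : y < 2 ^ (m + 1) := by simpa using hy
      have h0 : Real.logb 2 y < (m:ℝ) + 1 := by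
        rw [Real.logb_lt_iff_lt_rpow (by norm_num) (by linarith : (0:ℝ) < y)]
        calc y < (2:ℝ) ^ (m + 1) := hy'
          _ = (2:ℝ) ^ (((m:ℝ) + 1)) := by
              rw [show ((m:ℝ) + 1) = ((m+1 : ℕ) : ℝ) by push_cast; ring, Real.rpow_natCast]
      have : ⌊Real.logb 2 y⌋ < (m:ℤ) + 1 := by
        rw [Int.floor_lt]; push_cast; linarith
      omega
  | succ j ih =>
    intro T hT m hm y hy
    -- split T into two halves
    have hle : 2 ^ j ≤ T.card := by rw [hT]; exact Nat.pow_le_pow_right (by norm_num) (Nat.le_succ j)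
    obtain ⟨T1, hT1sub, hT1card⟩ := T.exists_subset_card_eq hle
    set T2 := T \ T1 with hT2def
    have hT2card : T2.card = 2 ^ j := by
      rw [hT2def, Finset.card_sdiff_of_subset hT1sub, hT, hT1card, pow_succ]; omega
    have hdisj : Disjoint T1 T2 := Finset.disjoint_sdiff
    set S := fun ω => ∑ i ∈ T1, X i ω with hSdef
    set S' := fun ω => ∑ i ∈ T2, X i ω with hS'def
    have hsplit : ∀ ω, ∑ i ∈ T, X i ω = S ω + S' ω := by
      intro ω
      rw [hSdef, hS'def, hT2def, ← Finset.sum_sdiff hT1sub]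
      ring
    have hSmeas : Measurable S := Finset.measurable_sum T1 fun i _ => hXmeas i
    have hS'meas : Measurable S' := Finset.measurable_sum T2 fun i _ => hXmeas i
    have hInd : IndepFun S S' P := stP_indep_sum X hXmeas hIndep T1 T2 hdisj
    set t1 : ℝ := y / 2 with ht1def
    set t2 : ℝ := max (y / 2) (y - 2 ^ (j+1)) with ht2def
    -- the three disjoint events
    set A := S ⁻¹' Set.Ioi t1 ∩ S' ⁻¹' Set.Ioi t1 with hAdef
    set B := S ⁻¹' Set.Ioi t2 ∩ S' ⁻¹' Set.Iic t1 with hBdef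
    set C := S ⁻¹' Set.Iic t1 ∩ S' ⁻¹' Set.Ioi t2 with hCdef
    set q := P (S ⁻¹' Set.Ioi t1) with hqdef
    set q' := P (S' ⁻¹' Set.Ioi t1) with hq'def
    set r := P (S ⁻¹' Set.Ioi t2) with hrdef
    set r' := P (S' ⁻¹' Set.Ioi t2) with hr'def
    set u := P (S ⁻¹' Set.Iic t1) with hudef
    set u' := P (S' ⁻¹' Set.Iic t1) with hu'def
    have hPA : P A = q * q' := hInd.measure_inter_preimage_eq_mul _ _ measurableSet_Ioi measurableSet_Ioi
    have hPB : P B = r * u' := hInd.measure_inter_preimage_eq_mul _ _ measurableSet_Ioi measurableSet_Iic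
    have hPC : P C = u * r' := hInd.measure_inter_preimage_eq_mul _ _ measurableSet_Iic measurableSet_Ioi
    -- IH bounds
    have hpow : (2:ℝ) ^ (j + 1 + m + 1) = 2 ^ (j + m + 1) * 2 := by
      rw [show j + 1 + m + 1 = (j + m + 1) + 1 by ring, pow_succ]
    have ht1lt : t1 < 2 ^ (j + m + 1) := by
      rw [ht1def, div_lt_iff₀ (by norm_num : (0:ℝ) < 2)]
      calc y < 2 ^ (j + 1 + m + 1) := hy
        _ = 2 ^ (j + m + 1) * 2 := hpow
    have ht2lt : t2 < 2 ^ (j + (m+1) + 1) := by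
      have he : j + (m+1) + 1 = j + 1 + m + 1 := by ring
      rw [ht2def, he]
      apply max_lt
      · calc y / 2 < 2 ^ (j + m + 1) := ht1lt
          _ ≤ 2 ^ (j + 1 + m + 1) := by
              apply pow_le_pow_right₀ one_le_two; omega
      · have h2p : (0:ℝ) < 2 ^ (j+1) := by positivity
        linarith
    have hq : ENNReal.ofReal ((2:ℝ) ^ (-(m:ℤ))) ≤ q := ih T1 hT1card m hm t1 ht1lt
    have hq' : ENNReal.ofReal ((2:ℝ) ^ (-(m:ℤ))) ≤ q' := ih T2 hT2card m hm t1 ht1lt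
    have hr : ENNReal.ofReal ((2:ℝ) ^ (-((m+1:ℕ):ℤ))) ≤ r :=
      ih T1 hT1card (m+1) (by omega) t2 ht2lt
    have hr' : ENNReal.ofReal ((2:ℝ) ^ (-((m+1:ℕ):ℤ))) ≤ r' :=
      ih T2 hT2card (m+1) (by omega) t2 ht2lt
    -- complements
    have hIic_compl : ∀ f : Ω → ℝ, f ⁻¹' Set.Iic t1 = (f ⁻¹' Set.Ioi t1)ᶜ := by
      intro f; ext ω; simp [not_lt]
    have hqu : q + u = 1 := by
      rw [hqdef, hudef, hIic_compl S, measure_add_measure_compl (hSmeas measurableSet_Ioi),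
        measure_univ]
    have hq'u' : q' + u' = 1 := by
      rw [hq'def, hu'def, hIic_compl S', measure_add_measure_compl (hS'meas measurableSet_Ioi),
        measure_univ]
    -- pass to real numbers
    set pm : ℝ := (2:ℝ) ^ (-(m:ℤ)) with hpmdef
    have hpm0 : 0 < pm := zpow_pos (by norm_num) _
    have hpmhalf : (2:ℝ) ^ (-((m+1:ℕ):ℤ)) = pm / 2 := by
      rw [hpmdef, show (-((m+1:ℕ):ℤ)) = -(m:ℤ) + (-1) by push_cast; ring,
        zpow_add₀ (by norm_num : (2:ℝ) ≠ 0)]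
      norm_num
      ring
    have hfin : ∀ s : Set Ω, P s ≠ ⊤ := fun s => measure_ne_top P s
    set qR := q.toReal with hqR
    set q'R := q'.toReal
    set rR := r.toReal
    set r'R := r'.toReal
    set uR := u.toReal
    set u'R := u'.toReal
    have hqRge : pm ≤ qR := (ENNReal.ofReal_le_iff_le_toReal (hfin _)).1 hq
    have hq'Rge : pm ≤ q'R := (ENNReal.ofReal_le_iff_le_toReal (hfin _)).1 hq'
    have hrRge : pm / 2 ≤ rR := by
      have := (ENNReal.ofReal_le_iff_le_toReal (hfin _)).1 hr
      rwa [hpmhalf] at this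
    have hr'Rge : pm / 2 ≤ r'R := by
      have := (ENNReal.ofReal_le_iff_le_toReal (hfin _)).1 hr'
      rwa [hpmhalf] at this
    have hquR : qR + uR = 1 := by
      have := congrArg ENNReal.toReal hqu
      rwa [ENNReal.toReal_add (hfin _) (hfin _), ENNReal.toReal_one] at this
    have hq'u'R : q'R + u'R = 1 := by
      have := congrArg ENNReal.toReal hq'u'
      rwa [ENNReal.toReal_add (hfin _) (hfin _), ENNReal.toReal_one] at this
    have huR0 : 0 ≤ uR := ENNReal.toReal_nonneg
    have hu'R0 : 0 ≤ u'R := ENNReal.toReal_nonneg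
    -- main real inequality
    have hreal : pm ≤ qR * q'R + rR * u'R + uR * r'R := by
      have h1 : 0 ≤ (qR - pm) * q'R := mul_nonneg (by linarith) (by linarith)
      have h2 : 0 ≤ (q'R - pm) * qR := mul_nonneg (by linarith) (by linarith)
      have h3 : 0 ≤ (rR - pm/2) * u'R := mul_nonneg (by linarith) hu'R0
      have h4 : 0 ≤ (r'R - pm/2) * uR := mul_nonneg (by linarith) huR0
      nlinarith [h1, h2, h3, h4]
    -- back to ENNReal
    have hZne : q * q' + r * u' + u * r' ≠ ⊤ := by
      apply ENNReal.add_ne_top.2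
      constructor
      · apply ENNReal.add_ne_top.2
        exact ⟨ENNReal.mul_ne_top (hfin _) (hfin _), ENNReal.mul_ne_top (hfin _) (hfin _)⟩
      · exact ENNReal.mul_ne_top (hfin _) (hfin _)
    have hsum : ENNReal.ofReal pm ≤ q * q' + r * u' + u * r' := by
      rw [ENNReal.ofReal_le_iff_le_toReal hZne]
      rw [ENNReal.toReal_add (by
          exact ENNReal.add_ne_top.2 ⟨ENNReal.mul_ne_top (hfin _) (hfin _),
            ENNReal.mul_ne_top (hfin _) (hfin _)⟩) (ENNReal.mul_ne_top (hfin _) (hfin _)),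
        ENNReal.toReal_add (ENNReal.mul_ne_top (hfin _) (hfin _))
          (ENNReal.mul_ne_top (hfin _) (hfin _)),
        ENNReal.toReal_mul, ENNReal.toReal_mul, ENNReal.toReal_mul]
      exact hreal
    -- disjointness and union
    have hmB : MeasurableSet B := (hSmeas measurableSet_Ioi).inter (hS'meas measurableSet_Iic)
    have hmC : MeasurableSet C := (hSmeas measurableSet_Iic).inter (hS'meas measurableSet_Ioi)
    have ht1t2 : t1 ≤ t2 := le_max_left _ _
    have hdAB : Disjoint A B := by
      rw [Set.disjoint_left]
      rintro ω ⟨_, h2⟩ ⟨_, h4⟩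
      simp only [Set.mem_preimage, Set.mem_Ioi, Set.mem_Iic] at h2 h4
      linarith
    have hdAC : Disjoint A C := by
      rw [Set.disjoint_left]
      rintro ω ⟨h1, _⟩ ⟨h3, _⟩
      simp only [Set.mem_preimage, Set.mem_Ioi, Set.mem_Iic] at h1 h3
      linarith
    have hdBC : Disjoint B C := by
      rw [Set.disjoint_left]
      rintro ω ⟨h1, _⟩ ⟨h3, _⟩
      simp only [Set.mem_preimage, Set.mem_Ioi, Set.mem_Iic] at h1 h3
      linarith
    have hPU : P (A ∪ B ∪ C) = q * q' + r * u' + u * r' := by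
      rw [measure_union (hdAC.union_left hdBC) hmC, measure_union hdAB hmB, hPA, hPB, hPC]
    -- the good event
    set G := {ω : Ω | ∀ i, 2 ≤ X i ω} with hGdef
    have hGc : P Gᶜ = 0 := by
      have h := stP_ae_ge_two P X hXmeas hsurv
      rw [ae_iff] at h
      rw [hGdef, Set.compl_setOf]
      exact h
    have hincl : A ∪ B ∪ C ⊆ {ω | ∑ i ∈ T, X i ω > y} ∪ Gᶜ := by
      intro ω hω
      by_cases hG : ω ∈ G
      · left
        have hSge : (2:ℝ) ^ (j+1) ≤ S ω := by
          calc (2:ℝ) ^ (j+1) = ∑ _i ∈ T1, (2:ℝ) := by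
                rw [Finset.sum_const, hT1card, nsmul_eq_mul, pow_succ]
                push_cast; ring
            _ ≤ S ω := Finset.sum_le_sum fun i _ => hG i
        have hS'ge : (2:ℝ) ^ (j+1) ≤ S' ω := by
          calc (2:ℝ) ^ (j+1) = ∑ _i ∈ T2, (2:ℝ) := by
                rw [Finset.sum_const, hT2card, nsmul_eq_mul, pow_succ]
                push_cast; ring
            _ ≤ S' ω := Finset.sum_le_sum fun i _ => hG i
        have ht2ge : y - 2 ^ (j+1) ≤ t2 := le_max_right _ _
        simp only [Set.mem_setOf_eq, gt_iff_lt, hsplit ω]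
        rcases hω with (⟨h1, h2⟩ | ⟨h1, h2⟩) | ⟨h1, h2⟩ <;>
          simp only [Set.mem_preimage, Set.mem_Ioi, Set.mem_Iic] at h1 h2
        · have : t1 = y / 2 := ht1def
          linarith
        · linarith
        · linarith
      · right; exact hG
    calc ENNReal.ofReal pm ≤ q * q' + r * u' + u * r' := hsum
      _ = P (A ∪ B ∪ C) := hPU.symm
      _ ≤ P ({ω | ∑ i ∈ T, X i ω > y} ∪ Gᶜ) := measure_mono hincl
      _ ≤ P {ω | ∑ i ∈ T, X i ω > y} + P Gᶜ := measure_union_le _ _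
      _ = P {ω | ∑ i ∈ T, X i ω > y} := by rw [hGc, add_zero]

theorem stPetersburg_average_dominates
    {Ω : Type*} [MeasurableSpace Ω] (P : Measure Ω) [IsProbabilityMeasure P]
    (X : ℕ → Ω → ℝ) (hXmeas : ∀ i, Measurable (X i))
    (hIndep : iIndepFun X P)
    (hsurv : ∀ i, ∀ x : ℝ,
      P {ω | X i ω > x} =
        ENNReal.ofReal (if x < 2 then 1 else (2 : ℝ) ^ (-⌊Real.logb 2 x⌋)))
    (k : ℕ) (hk : 1 ≤ k) :
    ∀ x : ℝ,
      P {ω | X 0 ω > x} ≤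
        P {ω | (∑ i ∈ Finset.range (2 ^ k), X (i + 1) ω) / (2 ^ k : ℝ) > x} := by
  intro x
  have hn : (0:ℝ) < (2:ℝ) ^ k := by positivity
  set T : Finset ℕ := (Finset.range (2 ^ k)).image (· + 1) with hTdef
  have hTcard : T.card = 2 ^ k := by
    rw [hTdef, Finset.card_image_of_injective _ (add_left_injective 1), Finset.card_range]
  have hTsum : ∀ ω, ∑ i ∈ T, X i ω = ∑ i ∈ Finset.range (2 ^ k), X (i + 1) ω := by
    intro ω
    rw [hTdef, Finset.sum_image (fun a _ b _ h => by omega)]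
  have hEvent : {ω | (∑ i ∈ Finset.range (2 ^ k), X (i + 1) ω) / (2 ^ k : ℝ) > x}
      = {ω | ∑ i ∈ T, X i ω > x * 2 ^ k} := by
    ext ω
    simp only [Set.mem_setOf_eq, gt_iff_lt, lt_div_iff₀ hn, hTsum ω]
  rw [hEvent, hsurv 0 x]
  by_cases hx : x < 2
  · rw [if_pos hx, ENNReal.ofReal_one]
    -- the event holds a.s.
    have hincl : {ω : Ω | ∀ i, 2 ≤ X i ω} ⊆ {ω | ∑ i ∈ T, X i ω > x * 2 ^ k} := by
      intro ω hω
      have hSge : (2:ℝ) * 2 ^ k ≤ ∑ i ∈ T, X i ω := by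
        calc (2:ℝ) * 2 ^ k = ∑ _i ∈ T, (2:ℝ) := by
              rw [Finset.sum_const, hTcard, nsmul_eq_mul]; push_cast; ring
          _ ≤ ∑ i ∈ T, X i ω := Finset.sum_le_sum fun i _ => hω i
      have : x * 2 ^ k < 2 * 2 ^ k := by
        apply mul_lt_mul_of_pos_right hx hn
      simp only [Set.mem_setOf_eq, gt_iff_lt]
      linarith
    have h1 : P {ω : Ω | ∀ i, 2 ≤ X i ω} = 1 := by
      have h := stP_ae_ge_two P X hXmeas hsurv
      rw [ae_iff] at h
      have hcompl : P {ω : Ω | ∀ i, 2 ≤ X i ω}ᶜ = 0 := by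
        rw [Set.compl_setOf]; exact h
      have h2 := measure_add_measure_compl (μ := P) (s := {ω : Ω | ∀ i, 2 ≤ X i ω}) (by
        have he : {ω : Ω | ∀ i, 2 ≤ X i ω} = ⋂ i, {ω | 2 ≤ X i ω} := by ext ω; simp
        rw [he]
        exact MeasurableSet.iInter fun i => measurableSet_le measurable_const (hXmeas i))
      rw [hcompl, add_zero, measure_univ] at h2
      exact h2
    calc (1 : ENNReal) = P {ω : Ω | ∀ i, 2 ≤ X i ω} := h1.symm
      _ ≤ P {ω | ∑ i ∈ T, X i ω > x * 2 ^ k} := measure_mono hincl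
  · rw [if_neg hx]
    have hx2 : (2:ℝ) ≤ x := not_lt.1 hx
    have hx0 : (0:ℝ) < x := by linarith
    set m : ℕ := (⌊Real.logb 2 x⌋).toNat with hmdef
    have hflge : 1 ≤ ⌊Real.logb 2 x⌋ := by
      have : (1:ℝ) ≤ Real.logb 2 x := by
        rw [Real.le_logb_iff_rpow_le (by norm_num) hx0, Real.rpow_one]
        exact hx2
      exact_mod_cast Int.le_floor.2 (by exact_mod_cast this)
    have hmcast : (m : ℤ) = ⌊Real.logb 2 x⌋ := Int.toNat_of_nonneg (by omega)
    have hm1 : 1 ≤ m := by omega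
    have hxlt : x < 2 ^ (m + 1) := by
      have h1 : Real.logb 2 x < (m:ℝ) + 1 := by
        have := Int.lt_floor_add_one (Real.logb 2 x)
        have h2 : ((⌊Real.logb 2 x⌋ : ℝ)) = (m:ℝ) := by exact_mod_cast hmcast.symm
        linarith
      have := (Real.logb_lt_iff_lt_rpow (by norm_num) hx0).1 h1
      calc x < (2:ℝ) ^ ((m:ℝ) + 1) := this
        _ = 2 ^ (m + 1) := by
            rw [show ((m:ℝ) + 1) = ((m+1 : ℕ) : ℝ) by push_cast; ring, Real.rpow_natCast]
    have hylt : x * 2 ^ k < 2 ^ (k + m + 1) := by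
      calc x * 2 ^ k < 2 ^ (m+1) * 2 ^ k := mul_lt_mul_of_pos_right hxlt hn
        _ = 2 ^ (k + m + 1) := by rw [← pow_add]; congr 1; ring
    have := stP_key P X hXmeas hIndep hsurv k T hTcard m hm1 (x * 2 ^ k) hylt
    calc ENNReal.ofReal ((2:ℝ) ^ (-⌊Real.logb 2 x⌋)) 
        = ENNReal.ofReal ((2:ℝ) ^ (-(m:ℤ))) := by rw [hmcast]
      _ ≤ P {ω | ∑ i ∈ T, X i ω > x * 2 ^ k} := this
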